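/- Let K = [[a,b],[b,d]] be a real symmetric 2×2 matrix, and let η > |ζ|/2 > 0 be real numbers. If K ≥ 0 and K ≤ η·1 + i(ζ/2)Ω (as complex Hermitian matrices), then Tr(K) ≤ 2η - |ζ|, with equality attained by K = (η - |ζ|/2)·1. -/

import Mathlib

open Matrix
open scoped ComplexOrder

noncomputable def Ωc : Matrix (Fin 2) (Fin 2) ℂ := !![0, 1; -1, 0]

theorem trace_max_under_constraint (a b d η ζ : ℝ) (hη : η > |ζ|/2) (hζ : |ζ|/2 > 0)
    (K : Matrix (Fin 2) (Fin 2) ℝ) (hKdef : K = !![a, b; b, d])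
    (hK : K.PosSemidef)
    (hle : (η • (1 : Matrix (Fin 2) (Fin 2) ℂ) + (Complex.I * ((ζ : ℂ)/2)) • Ωc
              - K.map Complex.ofReal).PosSemidef) :
    K.trace ≤ 2*η - |ζ| ∧
    ((η - |ζ|/2) • (1 : Matrix (Fin 2) (Fin 2) ℝ)).PosSemidef ∧
    (η • (1 : Matrix (Fin 2) (Fin 2) ℂ) + (Complex.I * ((ζ : ℂ)/2)) • Ωc
        - (((η - |ζ|/2) • (1 : Matrix (Fin 2) (Fin 2) ℝ)).map Complex.ofReal)).PosSemidef ∧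
    ((η - |ζ|/2) • (1 : Matrix (Fin 2) (Fin 2) ℝ)).trace = 2*η - |ζ| := by
  subst hKdef
  set t : ℝ := if 0 ≤ ζ then (1:ℝ) else -1 with ht
  have htζ : t * ζ = |ζ| := by
    rcases le_or_gt 0 ζ with h | h
    · simp [ht, h, abs_of_nonneg h]
    · simp [ht, not_le.mpr h, abs_of_neg h]
  refine ⟨?_, ?_, ?_, ?_⟩
  · have hq := hle.dotProduct_mulVec_nonneg ![1, (t : ℂ) * Complex.I]
    simp [Ωc, Matrix.mulVec, dotProduct, Fin.sum_univ_two, Matrix.one_apply,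
      Complex.le_def, Complex.ext_iff] at hq
    simp [Matrix.trace_fin_two]
    rcases le_or_gt 0 ζ with h | h
    · have ht1 : t = 1 := by simp [ht, h]
      rw [ht1] at hq
      rw [abs_of_nonneg h]
      linarith [hq.1]
    · have ht1 : t = -1 := by simp [ht, not_le.mpr h]
      rw [ht1] at hq
      rw [abs_of_neg h]
      linarith [hq.1]
  · refine posSemidef_iff_dotProduct_mulVec.mpr ⟨?_, fun x => ?_⟩
    · show _ = _
      ext i j
      fin_cases i <;> fin_cases j <;> simp [Matrix.conjTranspose_apply, Matrix.one_apply]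
    · have : star x ⬝ᵥ ((η - |ζ|/2) • (1 : Matrix (Fin 2) (Fin 2) ℝ)) *ᵥ x
          = (η - |ζ|/2) * (x 0 * x 0 + x 1 * x 1) := by
        simp [Matrix.mulVec, dotProduct, Fin.sum_univ_two, Matrix.one_apply]
        ring
      rw [this]
      have h1 : (0:ℝ) ≤ η - |ζ|/2 := by linarith
      nlinarith [mul_self_nonneg (x 0), mul_self_nonneg (x 1)]
  · refine posSemidef_iff_dotProduct_mulVec.mpr ⟨?_, ?_⟩
    · show _ = _
      ext i j
      fin_cases i <;> fin_cases j <;>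
        simp [Ωc, Matrix.conjTranspose_apply, Matrix.one_apply, Complex.ext_iff]
    · intro x
      have hexp : star x ⬝ᵥ (η • (1 : Matrix (Fin 2) (Fin 2) ℂ) + (Complex.I * ((ζ : ℂ)/2)) • Ωc
          - (((η - |ζ|/2) • (1 : Matrix (Fin 2) (Fin 2) ℝ)).map Complex.ofReal)) *ᵥ x
          = ((|ζ|/2) * ((x 0).re*(x 0).re + (x 0).im*(x 0).im + (x 1).re*(x 1).re + (x 1).im*(x 1).im)
             - ζ * ((x 0).re * (x 1).im - (x 0).im * (x 1).re) : ℝ) := by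
        simp [Ωc, Matrix.mulVec, dotProduct, Fin.sum_univ_two, Matrix.one_apply,
          Complex.ext_iff, Complex.mul_re, Complex.mul_im]
        constructor <;> ring
      rw [hexp]
      rw [Complex.zero_le_real]
      rcases abs_cases ζ with ⟨he, _⟩ | ⟨he, _⟩ <;> rw [he] <;>
        nlinarith [sq_nonneg ((x 0).re - (x 1).im), sq_nonneg ((x 0).re + (x 1).im),
          sq_nonneg ((x 0).im - (x 1).re), sq_nonneg ((x 0).im + (x 1).re)]
  · simp [Matrix.trace_smul, Matrix.trace_one]
    ring
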